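/- The map h:ℕ→ℕ defined by h(n)=⌊φn⌋ if n∈R_{1,0}∪R_{2,0}, h(n)=⌊(φ−1)n⌋+2 if n∈R_{2,2}, and h(n)=⌊(φ−1)n⌋−1 if n∈R_{3,1}, is a well-defined bijection of ℕ onto itself whose fourth iterate is the identity and whose second iterate is not the identity; that is, h is a permutation of ℕ of order 4. -/

import Mathlib

/-- The golden ratio φ = (1 + √5)/2. -/
noncomputable def phi : ℝ := (1 + Real.sqrt 5) / 2

/-- The lower Wythoff sequence a(n) = ⌊nφ⌋. -/
noncomputable def wa (n : ℕ) : ℕ := ⌊(n : ℝ) * phi⌋₊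

/-- f_{i,j}(n) = F(i+1)·a(n) + F(i)·n − j. -/
noncomputable def fij (i : ℕ) (j : ℤ) (n : ℕ) : ℤ :=
  (Nat.fib (i + 1) : ℤ) * wa n + (Nat.fib i : ℤ) * n - j

/-- R_{i,j} = { f_{i,j}(n) : n ∈ ℕ, n ≥ 1 }. -/
def R (i : ℕ) (j : ℤ) : Set ℤ := {m | ∃ n : ℕ, 0 < n ∧ fij i j n = m}

open scoped Classical in
/-- h(n) = ⌊φn⌋ if n ∈ R_{1,0} ∪ R_{2,0}, ⌊(φ−1)n⌋+2 if n ∈ R_{2,2},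
and ⌊(φ−1)n⌋−1 if n ∈ R_{3,1}. -/
noncomputable def h (n : ℕ) : ℕ :=
  if (n : ℤ) ∈ R 1 0 ∪ R 2 0 then wa n
  else if (n : ℤ) ∈ R 2 2 then ⌊(phi - 1) * (n : ℝ)⌋₊ + 2
  else ⌊(phi - 1) * (n : ℝ)⌋₊ - 1

lemma phi_irr : Irrational phi := by
  have h5 : Irrational (Real.sqrt 5) := (Nat.prime_five).irrational_sqrt
  have : Irrational ((1 + Real.sqrt 5) / 2) := by
    have := ((h5.ratCast_add 1).div_ratCast (q := 2) (by norm_num))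
    simpa using this
  simpa [phi] using this
lemma sqrt5_bounds : 2 < Real.sqrt 5 ∧ Real.sqrt 5 < 3 := by
  constructor
  · nlinarith [Real.sq_sqrt (by norm_num : (5:ℝ) ≥ 0), Real.sqrt_nonneg 5]
  · nlinarith [Real.sq_sqrt (by norm_num : (5:ℝ) ≥ 0), Real.sqrt_nonneg 5]
lemma phi_gt : 1 < phi := by have := sqrt5_bounds; unfold phi; linarith [this.1]
lemma phi_lt : phi < 2 := by have := sqrt5_bounds; unfold phi; linarith [this.2]
lemma phi_pos : 0 < phi := lt_trans one_pos phi_gt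
lemma phi_sq : phi * phi = phi + 1 := by
  unfold phi
  have : Real.sqrt 5 * Real.sqrt 5 = 5 := Real.mul_self_sqrt (by norm_num)
  nlinarith [this]
lemma nphi_ne (n k : ℕ) (hn : 0 < n) : (n : ℝ) * phi ≠ k := by
  have h := (phi_irr.natCast_mul (m := n) (by omega)).ne_nat k
  simpa using h
lemma wa_bounds (n : ℕ) (hn : 0 < n) :
    (wa n : ℝ) < n * phi ∧ (n : ℝ) * phi < wa n + 1 := by
  have h0 : (0:ℝ) ≤ (n:ℝ) * phi := mul_nonneg (Nat.cast_nonneg n) phi_pos.le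
  have h1 : (wa n : ℝ) ≤ n * phi := Nat.floor_le h0
  have h2 : (n:ℝ) * phi < wa n + 1 := Nat.lt_floor_add_one _
  exact ⟨lt_of_le_of_ne h1 (fun h => nphi_ne n (wa n) hn h.symm), h2⟩
lemma wa_eq (m k : ℕ) (h1 : (k : ℝ) < m * phi) (h2 : (m : ℝ) * phi < k + 1) :
    wa m = k := by
  unfold wa
  rw [Nat.floor_eq_iff (le_trans (Nat.cast_nonneg k) h1.le)]
  exact ⟨h1.le, h2⟩
lemma wa_ge (n : ℕ) : n ≤ wa n := by
  unfold wa
  exact Nat.le_floor (by nlinarith [phi_gt, Nat.cast_nonneg (α := ℝ) n])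
lemma wa_pos (n : ℕ) (hn : 0 < n) : 0 < wa n := lt_of_lt_of_le hn (wa_ge n)
lemma dichotomy (n : ℕ) (hn : 0 < n) :
    (∃ m, 0 < m ∧ wa m = n) ∨ (∃ m, 0 < m ∧ wa m + m = n) := by
  obtain ⟨hb1, hb2⟩ := wa_bounds n hn
  set k := wa n with hk
  have hkn : n ≤ k := wa_ge n
  have hsq := phi_sq
  have hgt := phi_gt
  have hlt := phi_lt
  have hp := phi_pos
  have m1 := mul_lt_mul_of_pos_right hb1 hp
  have m2 := mul_lt_mul_of_pos_right hb2 hp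
  rcases lt_or_gt_of_ne (nphi_ne (n+1) (k+2) (by omega)) with hc | hc
  · right
    have hc' := mul_lt_mul_of_pos_right hc hp
    push_cast at hc hc'
    have hk2n : k < 2*n := by
      have : (k:ℝ) < 2*n := by nlinarith
      exact_mod_cast this
    refine ⟨2*n - k, by omega, ?_⟩
    have hwa : wa (2*n - k) = k - n := by
      apply wa_eq
      · rw [Nat.cast_sub hkn, Nat.cast_sub hk2n.le]
        push_cast
        nlinarith
      · rw [Nat.cast_sub hkn, Nat.cast_sub hk2n.le]
        push_cast
        nlinarith
    rw [hwa]; omega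
  · left
    have hc' := mul_lt_mul_of_pos_right hc hp
    push_cast at hc hc'
    refine ⟨k + 1 - n, by omega, ?_⟩
    apply wa_eq
    · rw [Nat.cast_sub (by omega : n ≤ k + 1)]
      push_cast
      nlinarith
    · rw [Nat.cast_sub (by omega : n ≤ k + 1)]
      push_cast
      nlinarith
lemma not_both (m m' : ℕ) (hm : 0 < m) (hm' : 0 < m') : wa m ≠ wa m' + m' := by
  intro h
  obtain ⟨hb1, hb2⟩ := wa_bounds m hm
  obtain ⟨hb1', hb2'⟩ := wa_bounds m' hm'
  have hsq := phi_sq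
  have hgt := phi_gt
  have hp := phi_pos
  have m1 := mul_lt_mul_of_pos_right hb1' hp
  have m2 := mul_lt_mul_of_pos_right hb2' hp
  have hcast : (wa m : ℝ) = wa m' + m' := by rw [h]; push_cast; ring
  have h1 : (m : ℝ) + m' < m + m' + 1 ∧ True := ⟨by linarith, trivial⟩
  have e1 : (wa m : ℝ) < m + m' := by nlinarith
  have e2 : (m : ℝ) + m' < wa m + 1 := by nlinarith
  have c1 : wa m < m + m' := by exact_mod_cast e1
  have c2 : m + m' < wa m + 1 := by exact_mod_cast e2
  omega
lemma wa_inj (m m' : ℕ) (hm : 0 < m) (hm' : 0 < m') (h : wa m = wa m') : m = m' := by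
  obtain ⟨hb1, hb2⟩ := wa_bounds m hm
  obtain ⟨hb1', hb2'⟩ := wa_bounds m' hm'
  rw [h] at hb1 hb2
  have hgt := phi_gt
  have c1 : (m:ℝ) < m' + 1 := by nlinarith
  have c2 : (m':ℝ) < m + 1 := by nlinarith
  have d1 : m < m' + 1 := by exact_mod_cast c1
  have d2 : m' < m + 1 := by exact_mod_cast c2
  omega

lemma wa_wa (m : ℕ) (hm : 0 < m) : wa (wa m) + 1 = wa m + m := by
  obtain ⟨hb1, hb2⟩ := wa_bounds m hm
  have hk := wa_pos m hm
  have hq : (0:ℝ) < phi - 1 := by linarith [phi_gt]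
  have m1 := mul_lt_mul_of_pos_right hb1 hq
  have m2 := mul_lt_mul_of_pos_right hb2 hq
  have hsq := phi_sq
  have hlt := phi_lt
  have : wa (wa m) = wa m + m - 1 := by
    apply wa_eq
    · rw [Nat.cast_sub (by omega : 1 ≤ wa m + m)]
      push_cast
      nlinarith
    · rw [Nat.cast_sub (by omega : 1 ≤ wa m + m)]
      push_cast
      nlinarith
  omega
lemma wa_wb (m : ℕ) (hm : 0 < m) : wa (wa m + m) = 2 * wa m + m := by
  obtain ⟨hb1, hb2⟩ := wa_bounds m hm
  have hq : (0:ℝ) < phi - 1 := by linarith [phi_gt]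
  have hp := phi_pos
  have m1 := mul_lt_mul_of_pos_right hb1 hq
  have m2 := mul_lt_mul_of_pos_right hb2 hq
  have m3 := mul_lt_mul_of_pos_right hb1 hp
  have m4 := mul_lt_mul_of_pos_right hb2 hp
  have hsq := phi_sq
  have hlt := phi_lt
  apply wa_eq
  · push_cast
    nlinarith
  · push_cast
    nlinarith
-- floor inverse
lemma floor_inv (t : ℕ) (ht : 0 < t) : ⌊(phi - 1) * (wa t : ℝ)⌋₊ = t - 1 := by
  obtain ⟨hb1, hb2⟩ := wa_bounds t ht
  have hq : (0:ℝ) < phi - 1 := by linarith [phi_gt]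
  have m1 := mul_lt_mul_of_pos_right hb1 hq
  have m2 := mul_lt_mul_of_pos_right hb2 hq
  have hsq := phi_sq
  have hlt := phi_lt
  have h1 : ((t:ℝ) - 1) < (phi - 1) * (wa t : ℝ) := by nlinarith
  have h2 : (phi - 1) * (wa t : ℝ) < t := by nlinarith
  rw [Nat.floor_eq_iff (by positivity)]
  constructor
  · rw [Nat.cast_sub (by omega : 1 ≤ t)]; push_cast; linarith
  · rw [Nat.cast_sub (by omega : 1 ≤ t)]; push_cast; linarith
-- fij values
lemma fij10 (n : ℕ) : fij 1 0 n = (wa n : ℤ) + n := by simp [fij]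
lemma fij20 (n : ℕ) : fij 2 0 n = 2 * (wa n : ℤ) + n := by simp [fij]; ring_nf; tauto
lemma fij22 (n : ℕ) : fij 2 2 n = 2 * (wa n : ℤ) + n - 2 := by simp [fij]; ring_nf; tauto
lemma fij31 (n : ℕ) : fij 3 1 n = 3 * (wa n : ℤ) + 2 * n - 1 := by
  show (Nat.fib 4 : ℤ) * wa n + (Nat.fib 3 : ℤ) * n - 1 = _
  norm_num [Nat.fib]

-- aaa closed form
lemma wa3 (m : ℕ) (hm : 0 < m) : wa (wa (wa m)) = 2 * wa m + m - 2 := by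
  have h1 := wa_wa m hm
  have h2 := wa_wa (wa m) (wa_pos m hm)
  have := wa_ge m
  omega
-- membership extraction
lemma memR10 {n : ℕ} (hn : (n : ℤ) ∈ R 1 0) : ∃ m, 0 < m ∧ wa m + m = n := by
  obtain ⟨m, hm, he⟩ := hn
  rw [fij10] at he
  exact ⟨m, hm, by exact_mod_cast he⟩
lemma memR20 {n : ℕ} (hn : (n : ℤ) ∈ R 2 0) : ∃ m, 0 < m ∧ 2 * wa m + m = n := by
  obtain ⟨m, hm, he⟩ := hn
  rw [fij20] at he
  exact ⟨m, hm, by exact_mod_cast he⟩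
lemma memR22 {n : ℕ} (hn : (n : ℤ) ∈ R 2 2) : ∃ m, 0 < m ∧ 2 * wa m + m - 2 = n := by
  obtain ⟨m, hm, he⟩ := hn
  rw [fij22] at he
  have := wa_ge m
  exact ⟨m, hm, by omega⟩
lemma inR10 (m : ℕ) (hm : 0 < m) : ((wa m + m : ℕ) : ℤ) ∈ R 1 0 :=
  ⟨m, hm, by rw [fij10]; push_cast; ring⟩
lemma inR20 (m : ℕ) (hm : 0 < m) : ((2 * wa m + m : ℕ) : ℤ) ∈ R 2 0 :=
  ⟨m, hm, by rw [fij20]; push_cast; ring⟩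
lemma inR22 (m : ℕ) (hm : 0 < m) : ((2 * wa m + m - 2 : ℕ) : ℤ) ∈ R 2 2 :=
  ⟨m, hm, by rw [fij22]; have := wa_ge m; omega⟩
-- evaluation lemmas
lemma h_eval1 (m : ℕ) (hm : 0 < m) : h (wa m + m) = 2 * wa m + m := by
  unfold h
  rw [if_pos (Set.mem_union_left _ (inR10 m hm))]
  exact wa_wb m hm
lemma h_eval2 (m : ℕ) (hm : 0 < m) : h (2 * wa m + m) = 3 * wa m + 2 * m - 1 := by
  unfold h
  rw [if_pos (Set.mem_union_right _ (inR20 m hm))]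
  have ht : 0 < wa m + m := by have := wa_pos m hm; omega
  have e1 := wa_wb m hm
  have e2 := wa_wa (wa m + m) ht
  rw [← e1]
  omega
lemma h_eval3 (m : ℕ) (hm : 0 < m) : h (2 * wa m + m - 2) = wa m + m := by
  have hwm := wa_pos m hm
  have hgem := wa_ge m
  have h3 := wa3 m hm
  have h2 := wa_wa m hm
  have hwwm := wa_pos (wa m) hwm
  unfold h
  rw [if_neg, if_pos (inR22 m hm)]
  · rw [show (2 * wa m + m - 2 : ℕ) = wa (wa (wa m)) from h3.symm]
    rw [floor_inv (wa (wa m)) hwwm]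
    omega
  · rintro (hc | hc)
    · obtain ⟨m', hm', he⟩ := memR10 hc
      rw [← h3] at he
      exact not_both (wa (wa m)) m' hwwm hm' he.symm
    · obtain ⟨m', hm', he⟩ := memR20 hc
      rw [← wa_wb m' hm', ← h3] at he
      have := wa_inj (wa m' + m') (wa (wa m)) (by have := wa_pos m' hm'; omega) hwwm he
      exact not_both (wa m) m' hwm hm' this.symm
lemma h_eval4 (m : ℕ) (hm : 0 < m) : h (3 * wa m + 2 * m - 1) = 2 * wa m + m - 2 := by
  have hwm := wa_pos m hm
  have hgem := wa_ge m
  have ht : 0 < wa m + m := by omega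
  have e1 := wa_wb m hm
  have e2 := wa_wa (wa m + m) ht
  have hwt : 0 < wa (wa m + m) := wa_pos _ ht
  -- n = wa (wa (wa m + m)) = 3 wa m + 2 m - 1
  have hn : (3 * wa m + 2 * m - 1 : ℕ) = wa (wa (wa m + m)) := by omega
  unfold h
  rw [if_neg, if_neg]
  · rw [hn, floor_inv (wa (wa m + m)) hwt]
    omega
  · intro hc
    obtain ⟨m', hm', he⟩ := memR22 hc
    rw [← wa3 m' hm', hn] at he
    have i1 := wa_inj (wa (wa m')) (wa (wa m + m)) (wa_pos _ (wa_pos m' hm')) hwt he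
    have i2 := wa_inj (wa m') (wa m + m) (wa_pos m' hm') ht i1
    exact not_both m' m hm' hm i2
  · rintro (hc | hc)
    · obtain ⟨m', hm', he⟩ := memR10 hc
      rw [hn] at he
      exact not_both (wa (wa m + m)) m' hwt hm' he.symm
    · obtain ⟨m', hm', he⟩ := memR20 hc
      rw [← wa_wb m' hm', hn] at he
      have := wa_inj (wa m' + m') (wa (wa m + m)) (by have := wa_pos m' hm'; omega) hwt he
      exact not_both (wa m + m) m' ht hm' this.symm
-- classification
lemma classify (n : ℕ) (hn : 0 < n) :
    ∃ m, 0 < m ∧ (n = wa m + m ∨ n = 2 * wa m + m ∨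
      n = 2 * wa m + m - 2 ∨ n = 3 * wa m + 2 * m - 1) := by
  rcases dichotomy n hn with ⟨t, ht, hw⟩ | ⟨m, hm, hw⟩
  · rcases dichotomy t ht with ⟨s, hs, hw2⟩ | ⟨m, hm, hw2⟩
    · rcases dichotomy s hs with ⟨u, hu, hw3⟩ | ⟨u, hu, hw3⟩
      · refine ⟨u, hu, Or.inr (Or.inr (Or.inl ?_))⟩
        have := wa3 u hu
        subst hw3 hw2 hw
        omega
      · refine ⟨u, hu, Or.inr (Or.inr (Or.inr ?_))⟩
        have e1 := wa_wb u hu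
        have e2 := wa_wa (wa u + u) (by have := wa_pos u hu; omega)
        subst hw3 hw2 hw
        omega
    · refine ⟨m, hm, Or.inr (Or.inl ?_)⟩
      have := wa_wb m hm
      subst hw2 hw
      omega
  · exact ⟨m, hm, Or.inl hw.symm⟩
lemma h_pos (n : ℕ) (hn : 0 < n) : 0 < h n := by
  obtain ⟨m, hm, hc⟩ := classify n hn
  have hg := wa_ge m
  rcases hc with rfl | rfl | rfl | rfl
  · rw [h_eval1 m hm]; omega
  · rw [h_eval2 m hm]; omega
  · rw [h_eval3 m hm]; omega
  · rw [h_eval4 m hm]; omega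
lemma h_cycle (n : ℕ) (hn : 0 < n) : h (h (h (h n))) = n := by
  obtain ⟨m, hm, hc⟩ := classify n hn
  rcases hc with rfl | rfl | rfl | rfl
  · rw [h_eval1 m hm, h_eval2 m hm, h_eval4 m hm, h_eval3 m hm]
  · rw [h_eval2 m hm, h_eval4 m hm, h_eval3 m hm, h_eval1 m hm]
  · rw [h_eval3 m hm, h_eval1 m hm, h_eval2 m hm, h_eval4 m hm]
  · rw [h_eval4 m hm, h_eval3 m hm, h_eval1 m hm, h_eval2 m hm]
theorem stmt_9 :
    Set.BijOn h {n : ℕ | 0 < n} {n : ℕ | 0 < n} ∧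
    (∀ n : ℕ, 0 < n → h^[4] n = n) ∧
    (∃ n : ℕ, 0 < n ∧ h^[2] n ≠ n) := by
  have hit4 : ∀ n : ℕ, h^[4] n = h (h (h (h n))) := by
    intro n
    simp [Function.iterate_succ_apply, Function.iterate_zero_apply]
  refine ⟨⟨fun n hn => h_pos n hn, ?_, ?_⟩, ?_, ?_⟩
  · intro a ha b hb hab
    calc a = h (h (h (h a))) := (h_cycle a ha).symm
    _ = h (h (h (h b))) := by rw [hab]
    _ = b := h_cycle b hb
  · intro y hy
    exact ⟨h (h (h y)), h_pos _ (h_pos _ (h_pos _ hy)), h_cycle y hy⟩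
  · intro n hn
    rw [hit4 n, h_cycle n hn]
  · refine ⟨2, by norm_num, ?_⟩
    have hw1 : wa 1 = 1 := by
      apply wa_eq <;> push_cast <;> simp <;> [exact phi_gt; linarith [phi_lt]]
    have e1 : h 2 = 3 := by
      have := h_eval1 1 one_pos
      rw [hw1] at this
      exact this
    have e2 : h 3 = 4 := by
      have := h_eval2 1 one_pos
      rw [hw1] at this
      exact this
    have : h^[2] 2 = 4 := by
      simp [Function.iterate_succ_apply, Function.iterate_zero_apply, e1, e2]
    omega
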